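/- Let γ, B ∈ M_k be Hermitian with γ positive semidefinite, B ≠ 0, range(B) ⊆ range(γ), and B not a real scalar multiple of γ. Then there exists λ ∈ R such that γ − λB is positive semidefinite, nonzero, and ker(γ − λB) ∩ range(γ) contains a nonzero vector. -/

import Mathlib

open Matrix ComplexOrder

private lemma herm_real' {k : ℕ} {A : Matrix (Fin k) (Fin k) ℂ} (hA : A.IsHermitian)
    (x : Fin k → ℂ) : (((star x ⬝ᵥ A *ᵥ x).re : ℝ) : ℂ) = star x ⬝ᵥ A *ᵥ x := by
  rw [← Complex.conj_eq_iff_re]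
  calc (starRingEnd ℂ) (star x ⬝ᵥ A *ᵥ x)
      = star (star x ⬝ᵥ A *ᵥ x) := rfl
    _ = star (A *ᵥ x) ⬝ᵥ x := by rw [star_dotProduct, star_star]
    _ = (star x ᵥ* Aᴴ) ⬝ᵥ x := by rw [star_mulVec]
    _ = star x ⬝ᵥ Aᴴ *ᵥ x := by rw [← dotProduct_mulVec]
    _ = star x ⬝ᵥ A *ᵥ x := by rw [hA.eq]

private lemma form_split' {k : ℕ} {A : Matrix (Fin k) (Fin k) ℂ} (hA : A.IsHermitian)
    {p w : Fin k → ℂ} (hw : A *ᵥ w = 0) :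
    star (p + w) ⬝ᵥ A *ᵥ (p + w) = star p ⬝ᵥ A *ᵥ p := by
  have hcross : star w ⬝ᵥ A *ᵥ p = 0 := by
    rw [dotProduct_mulVec, ← hA.eq, ← star_mulVec, hw]
    simp
  rw [mulVec_add, hw, add_zero, star_add, add_dotProduct, hcross, add_zero]

private lemma form_smul' {k : ℕ} (A : Matrix (Fin k) (Fin k) ℂ) (c : ℝ) (v : Fin k → ℂ) :
    star ((c : ℂ) • v) ⬝ᵥ A *ᵥ ((c : ℂ) • v) = ((c^2 : ℝ) : ℂ) * (star v ⬝ᵥ A *ᵥ v) := by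
  rw [star_smul, mulVec_smul, smul_dotProduct, dotProduct_smul]
  push_cast
  simp [smul_eq_mul]
  ring

private lemma ker_sub' {k : ℕ} {γ B : Matrix (Fin k) (Fin k) ℂ}
    (hγ : γ.IsHermitian) (hB : B.IsHermitian)
    (hrange : ∀ x : Fin k → ℂ, (∃ z, B *ᵥ z = x) → ∃ z, γ *ᵥ z = x)
    {y : Fin k → ℂ} (hy : γ *ᵥ y = 0) : B *ᵥ y = 0 := by
  set u := B *ᵥ y with hu
  obtain ⟨w, hw⟩ := hrange (B *ᵥ u) ⟨u, rfl⟩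
  have : star u ⬝ᵥ u = 0 := by
    calc star (B *ᵥ y) ⬝ᵥ u = (star y ᵥ* Bᴴ) ⬝ᵥ u := by rw [star_mulVec]
      _ = (star y ᵥ* B) ⬝ᵥ u := by rw [hB.eq]
      _ = star y ⬝ᵥ B *ᵥ u := by rw [← dotProduct_mulVec]
      _ = star y ⬝ᵥ γ *ᵥ w := by rw [hw]
      _ = (star y ᵥ* γ) ⬝ᵥ w := by rw [dotProduct_mulVec]
      _ = (star y ᵥ* γᴴ) ⬝ᵥ w := by rw [hγ.eq]
      _ = star (γ *ᵥ y) ⬝ᵥ w := by rw [star_mulVec]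
      _ = 0 := by rw [hy]; simp
  exact dotProduct_star_self_eq_zero.mp this

private lemma pos_on_range' {k : ℕ} {γ : Matrix (Fin k) (Fin k) ℂ} (hγ : γ.PosSemidef)
    {v : Fin k → ℂ} (hv : ∃ z, γ *ᵥ z = v) (hv0 : v ≠ 0) :
    0 < (star v ⬝ᵥ γ *ᵥ v).re := by
  have h0 : 0 ≤ (star v ⬝ᵥ γ *ᵥ v).re := by
    have := hγ.dotProduct_mulVec_nonneg v
    rw [Complex.le_def] at this
    simpa using this.1
  rcases lt_or_eq_of_le h0 with h | h
  · exact h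
  · exfalso
    have hz : star v ⬝ᵥ γ *ᵥ v = 0 := by
      rw [← herm_real' hγ.1 v, ← h]; simp
    have hker : γ *ᵥ v = 0 := (hγ.dotProduct_mulVec_zero_iff v).mp hz
    obtain ⟨z, hz'⟩ := hv
    have : star v ⬝ᵥ v = 0 := by
      calc star v ⬝ᵥ v = star (γ *ᵥ z) ⬝ᵥ v := by rw [hz']
        _ = (star z ᵥ* γᴴ) ⬝ᵥ v := by rw [star_mulVec]
        _ = star z ⬝ᵥ γᴴ *ᵥ v := by rw [← dotProduct_mulVec]
        _ = star z ⬝ᵥ γ *ᵥ v := by rw [hγ.1.eq]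
        _ = 0 := by rw [hker]; simp
    exact hv0 (dotProduct_star_self_eq_zero.mp this)

private lemma decomp' {k : ℕ} {γ : Matrix (Fin k) (Fin k) ℂ} (hγ : γ.PosSemidef)
    (x : Fin k → ℂ) :
    ∃ p w, (∃ z, γ *ᵥ z = p) ∧ γ *ᵥ w = 0 ∧ x = p + w := by
  set V := LinearMap.range γ.mulVecLin with hV
  set K := LinearMap.ker γ.mulVecLin with hK
  have hmemV : ∀ v : Fin k → ℂ, v ∈ V ↔ ∃ z, γ *ᵥ z = v := by
    intro v
    simp [hV, LinearMap.mem_range, Matrix.mulVecLin_apply]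
  have hdisj : V ⊓ K = ⊥ := by
    rw [Submodule.eq_bot_iff]
    rintro v ⟨hvV, hvK⟩
    by_contra hv0
    have hpos := pos_on_range' hγ ((hmemV v).mp hvV) hv0
    have hk : γ *ᵥ v = 0 := by simpa [hK, Matrix.mulVecLin_apply] using hvK
    rw [hk] at hpos
    simp at hpos
  have hrk : Module.finrank ℂ V + Module.finrank ℂ K = k := by
    have := LinearMap.finrank_range_add_finrank_ker γ.mulVecLin
    simpa using this
  have hsup : V ⊔ K = ⊤ := by
    apply Submodule.eq_top_of_finrank_eq
    have h2 := Submodule.finrank_sup_add_finrank_inf_eq V K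
    rw [hdisj] at h2
    simp only [finrank_bot, add_zero] at h2
    rw [h2, hrk]
    simp
  have hx : x ∈ V ⊔ K := by rw [hsup]; trivial
  obtain ⟨p, hp, w, hw, hpw⟩ := Submodule.mem_sup.mp hx
  exact ⟨p, w, (hmemV p).mp hp, by simpa [hK, Matrix.mulVecLin_apply] using hw, hpw.symm⟩

private lemma key' {k : ℕ} {γ B : Matrix (Fin k) (Fin k) ℂ}
    (hγ : γ.PosSemidef) (hB : B.IsHermitian)
    (hrange : ∀ x : Fin k → ℂ, (∃ z, B *ᵥ z = x) → ∃ z, γ *ᵥ z = x)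
    (hv : ∃ v, (∃ z, γ *ᵥ z = v) ∧ 0 < (star v ⬝ᵥ B *ᵥ v).re) :
    ∃ lam : ℝ, 0 < lam ∧ (γ - (lam : ℂ) • B).PosSemidef ∧
      ∃ x : Fin k → ℂ, x ≠ 0 ∧ (γ - (lam : ℂ) • B) *ᵥ x = 0 ∧ ∃ z, γ *ᵥ z = x := by
  classical
  set V := LinearMap.range γ.mulVecLin with hV
  have hmemV : ∀ v : Fin k → ℂ, v ∈ V ↔ ∃ z, γ *ᵥ z = v := by
    intro v
    simp [hV, LinearMap.mem_range, Matrix.mulVecLin_apply]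
  -- the two real quadratic forms
  set bf : (Fin k → ℂ) → ℝ := fun x => (star x ⬝ᵥ B *ᵥ x).re with hbf
  set qf : (Fin k → ℂ) → ℝ := fun x => (star x ⬝ᵥ γ *ᵥ x).re with hqf
  have hbf_cont : Continuous bf := by
    apply Complex.continuous_re.comp
    exact Continuous.dotProduct continuous_star
      (Continuous.matrix_mulVec continuous_const continuous_id)
  have hqf_cont : Continuous qf := by
    apply Complex.continuous_re.comp
    exact Continuous.dotProduct continuous_star
      (Continuous.matrix_mulVec continuous_const continuous_id)
  have hqpos : ∀ v : Fin k → ℂ, v ∈ V → v ≠ 0 → 0 < qf v := by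
    intro v hvV hv0
    exact pos_on_range' hγ ((hmemV v).mp hvV) hv0
  -- scaling
  have hscale : ∀ (c : ℝ) (A : Matrix (Fin k) (Fin k) ℂ) (v : Fin k → ℂ),
      (star ((c : ℂ) • v) ⬝ᵥ A *ᵥ ((c : ℂ) • v)).re = c ^ 2 * (star v ⬝ᵥ A *ᵥ v).re := by
    intro c A v
    rw [form_smul']
    exact Complex.re_ofReal_mul _ _
  -- compactness setup on the subtype V
  haveI : ProperSpace (↥V) := FiniteDimensional.proper ℂ (↥V)
  obtain ⟨v1, hv1V, hv1pos⟩ := hv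
  have hv1V' : v1 ∈ V := (hmemV v1).mpr hv1V
  have hv1ne : v1 ≠ 0 := by
    rintro rfl
    simp at hv1pos
  have hnv1 : ‖v1‖ ≠ 0 := norm_ne_zero_iff.mpr hv1ne
  -- normalization map
  have hnorm_unit : ∀ v : Fin k → ℂ, v ≠ 0 → ‖((‖v‖⁻¹ : ℝ) : ℂ) • v‖ = 1 := by
    intro v hv0
    rw [norm_smul]
    simp [norm_ne_zero_iff.mpr hv0]
  set e1 : ↥V := ⟨((‖v1‖⁻¹ : ℝ) : ℂ) • v1, V.smul_mem _ hv1V'⟩ with he1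
  have he1s : e1 ∈ Metric.sphere (0 : ↥V) 1 := by
    rw [mem_sphere_zero_iff_norm]
    show ‖(e1 : Fin k → ℂ)‖ = 1
    exact hnorm_unit v1 hv1ne
  have hcmp : IsCompact (Metric.sphere (0 : ↥V) 1) := isCompact_sphere 0 1
  set F : ↥V → ℝ := fun w => bf (w : Fin k → ℂ) / qf (w : Fin k → ℂ) with hF
  have hFcont : ContinuousOn F (Metric.sphere (0 : ↥V) 1) := by
    apply ContinuousOn.div
    · exact (hbf_cont.comp continuous_subtype_val).continuousOn
    · exact (hqf_cont.comp continuous_subtype_val).continuousOn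
    · intro w hw
      have hw1 : ‖(w : Fin k → ℂ)‖ = 1 := by
        rw [mem_sphere_zero_iff_norm] at hw
        exact hw
      have hwne : (w : Fin k → ℂ) ≠ 0 := by
        intro h
        rw [h] at hw1; simp at hw1
      exact ne_of_gt (hqpos _ w.2 hwne)
  obtain ⟨w₀, hw₀s, hmax⟩ := hcmp.exists_isMaxOn ⟨e1, he1s⟩ hFcont
  set v₀ : Fin k → ℂ := (w₀ : Fin k → ℂ) with hv₀
  have hv₀V : v₀ ∈ V := w₀.2
  have hv₀n : ‖v₀‖ = 1 := by
    rw [mem_sphere_zero_iff_norm] at hw₀s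
    exact hw₀s
  have hv₀ne : v₀ ≠ 0 := by
    intro h; rw [h] at hv₀n; simp at hv₀n
  have hq₀ : 0 < qf v₀ := hqpos _ hv₀V hv₀ne
  set s : ℝ := F w₀ with hs
  -- the max property in unnormalized form
  have hsle : ∀ v : Fin k → ℂ, v ∈ V → bf v ≤ s * qf v := by
    intro v hvV
    rcases eq_or_ne v 0 with rfl | hvne
    · simp [hbf, hqf]
    · have hnv : (0:ℝ) < ‖v‖ := norm_pos_iff.mpr hvne
      set e : ↥V := ⟨((‖v‖⁻¹ : ℝ) : ℂ) • v, V.smul_mem _ hvV⟩ with he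
      have hes : e ∈ Metric.sphere (0 : ↥V) 1 := by
        rw [mem_sphere_zero_iff_norm]
        show ‖(e : Fin k → ℂ)‖ = 1
        exact hnorm_unit v hvne
      have hFe : F e ≤ s := hmax hes
      have hc2 : (0:ℝ) < (‖v‖⁻¹) ^ 2 := by positivity
      have hFe' : F e = bf v / qf v := by
        show bf (((‖v‖⁻¹ : ℝ) : ℂ) • v) / qf (((‖v‖⁻¹ : ℝ) : ℂ) • v) = bf v / qf v
        rw [hbf, hqf]
        simp only
        rw [hscale, hscale]
        rw [mul_div_mul_left _ _ (ne_of_gt hc2)]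
      rw [hFe'] at hFe
      have hqv : 0 < qf v := hqpos v hvV hvne
      calc bf v = (bf v / qf v) * qf v := by field_simp
        _ ≤ s * qf v := mul_le_mul_of_nonneg_right hFe (le_of_lt hqv)
  have hs0 : 0 < s := by
    have h1 := hsle v1 hv1V'
    have h2 := hqpos v1 hv1V' hv1ne
    nlinarith [hv1pos, h1, h2]
  set lam : ℝ := s⁻¹ with hlamdef
  have hlam : 0 < lam := inv_pos.mpr hs0
  have hlam_s : lam * s = 1 := inv_mul_cancel₀ (ne_of_gt hs0)
  have hMh : (γ - (lam : ℂ) • B).IsHermitian := by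
    have h1 : ((lam : ℂ) • B)ᴴ = (lam : ℂ) • B := by
      rw [conjTranspose_smul, hB.eq]
      congr 1
      simp [Complex.conj_ofReal]
    exact IsHermitian.sub hγ.1 h1
  have hform : ∀ x : Fin k → ℂ, star x ⬝ᵥ (γ - (lam : ℂ) • B) *ᵥ x
      = ((qf x - lam * bf x : ℝ) : ℂ) := by
    intro x
    rw [sub_mulVec, dotProduct_sub, smul_mulVec, dotProduct_smul,
      ← herm_real' hγ.1 x, ← herm_real' hB x]
    push_cast
    simp only [smul_eq_mul, hbf, hqf]
  have hpsd : (γ - (lam : ℂ) • B).PosSemidef := by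
    refine PosSemidef.of_dotProduct_mulVec_nonneg hMh (fun x => ?_)
    rw [hform x, Complex.zero_le_real]
    obtain ⟨p, w, hpV, hw0, rfl⟩ := decomp' hγ x
    have hBw : B *ᵥ w = 0 := ker_sub' hγ.1 hB hrange hw0
    have hq : qf (p + w) = qf p := by
      simp only [hqf]
      rw [form_split' hγ.1 hw0]
    have hb : bf (p + w) = bf p := by
      simp only [hbf]
      rw [form_split' hB hBw]
    rw [hq, hb]
    have hle := hsle p ((hmemV p).mpr hpV)
    have h2 : lam * bf p ≤ lam * (s * qf p) := mul_le_mul_of_nonneg_left hle (le_of_lt hlam)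
    have h3 : lam * (s * qf p) = qf p := by rw [← mul_assoc, hlam_s, one_mul]
    linarith
  have heq : bf v₀ = s * qf v₀ := by
    have : s = bf v₀ / qf v₀ := rfl
    rw [this]
    field_simp
  have hzero : (γ - (lam : ℂ) • B) *ᵥ v₀ = 0 := by
    apply (hpsd.dotProduct_mulVec_zero_iff v₀).mp
    rw [hform v₀]
    have h4 : qf v₀ - lam * bf v₀ = 0 := by
      rw [heq, ← mul_assoc, hlam_s, one_mul]
      ring
    rw [h4]
    simp
  exact ⟨lam, hlam, hpsd, v₀, hv₀ne, hzero, (hmemV v₀).mp hv₀V⟩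

theorem stmt12 {k : ℕ} (γ B : Matrix (Fin k) (Fin k) ℂ)
    (hγ : γ.PosSemidef) (hB : B.IsHermitian) (hB0 : B ≠ 0)
    (hrange : ∀ x : Fin k → ℂ, (∃ z, B *ᵥ z = x) → ∃ z, γ *ᵥ z = x)
    (hnotmul : ∀ c : ℝ, B ≠ (c : ℂ) • γ) :
    ∃ lam : ℝ,
      (γ - (lam : ℂ) • B).PosSemidef ∧
      γ - (lam : ℂ) • B ≠ 0 ∧
      ∃ x : Fin k → ℂ, x ≠ 0 ∧ (γ - (lam : ℂ) • B) *ᵥ x = 0 ∧ ∃ z, γ *ᵥ z = x := by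
  -- nonzeroness for any nonzero coefficient
  have hnz : ∀ t : ℝ, t ≠ 0 → γ - (t : ℂ) • B ≠ 0 := by
    intro t ht h0
    apply hnotmul t⁻¹
    have hγt : γ = (t : ℂ) • B := sub_eq_zero.mp h0
    rw [hγt, smul_smul]
    push_cast
    rw [inv_mul_cancel₀ (by exact_mod_cast ht : (t : ℂ) ≠ 0), one_smul]
  -- find a vector in range γ where the B-form is nonzero
  have hexist : ∃ v, (∃ z, γ *ᵥ z = v) ∧ (star v ⬝ᵥ B *ᵥ v).re ≠ 0 := by
    by_contra h
    push_neg at h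
    have hz : ∀ v, (∃ z, γ *ᵥ z = v) → star v ⬝ᵥ B *ᵥ v = 0 := by
      intro v hv
      rw [← herm_real' hB v, h v hv]
      simp
    have hy : ∃ y, B *ᵥ y ≠ 0 := by
      by_contra hy
      push_neg at hy
      apply hB0
      ext i j
      have := congr_fun (hy (Pi.single j 1)) i
      simpa [Matrix.mulVec_single_one] using this
    obtain ⟨y, hBy⟩ := hy
    obtain ⟨p, w, hpV, hw0, rfl⟩ := decomp' hγ y
    have hBw : B *ᵥ w = 0 := ker_sub' hγ.1 hB hrange hw0
    have hBp : B *ᵥ p = B *ᵥ (p + w) := by rw [mulVec_add, hBw, add_zero]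
    set u := B *ᵥ p with hu
    have hune : u ≠ 0 := by rw [hBp]; exact hBy
    have huV : ∃ z, γ *ᵥ z = u := hrange u ⟨p, rfl⟩
    have hpuV : ∃ z, γ *ᵥ z = p + u := by
      obtain ⟨z1, h1⟩ := hpV
      obtain ⟨z2, h2⟩ := huV
      exact ⟨z1 + z2, by rw [mulVec_add, h1, h2]⟩
    have h1 : star (p + u) ⬝ᵥ B *ᵥ (p + u) = 0 := hz _ hpuV
    have hcross2 : star p ⬝ᵥ B *ᵥ u = star u ⬝ᵥ u := by
      calc star p ⬝ᵥ B *ᵥ u = (star p ᵥ* B) ⬝ᵥ u := dotProduct_mulVec _ _ _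
        _ = (star p ᵥ* Bᴴ) ⬝ᵥ u := by rw [hB.eq]
        _ = star (B *ᵥ p) ⬝ᵥ u := by rw [star_mulVec]
        _ = star u ⬝ᵥ u := by rw [← hu]
    have hexp : star (p + u) ⬝ᵥ B *ᵥ (p + u)
        = star p ⬝ᵥ B *ᵥ p + star p ⬝ᵥ B *ᵥ u + (star u ⬝ᵥ B *ᵥ p + star u ⬝ᵥ B *ᵥ u) := by
      rw [mulVec_add, star_add, add_dotProduct, dotProduct_add, dotProduct_add]
    rw [hexp, hz p hpV, hz u huV, hcross2, ← hu] at h1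
    have h2 : star u ⬝ᵥ u = 0 := by linear_combination h1 / 2
    exact hune (dotProduct_star_self_eq_zero.mp h2)
  obtain ⟨v, hvV, hvne⟩ := hexist
  rcases hvne.lt_or_gt with hneg | hpos
  · -- negative case: apply key' to -B
    have hBneg : (-B).IsHermitian := hB.neg
    have hrange' : ∀ x : Fin k → ℂ, (∃ z, (-B) *ᵥ z = x) → ∃ z, γ *ᵥ z = x := by
      rintro x ⟨z, hz⟩
      exact hrange x ⟨-z, by rw [mulVec_neg, ← neg_mulVec, hz]⟩
    have hv' : ∃ v', (∃ z, γ *ᵥ z = v') ∧ 0 < (star v' ⬝ᵥ (-B) *ᵥ v').re := by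
      refine ⟨v, hvV, ?_⟩
      rw [neg_mulVec, dotProduct_neg]
      simpa using hneg
    obtain ⟨lam, hlam, hpsd, x, hxne, hxzero, hxV⟩ := key' hγ hBneg hrange' hv'
    have hEq : γ - ((-lam : ℝ) : ℂ) • B = γ - (lam : ℂ) • (-B) := by
      push_cast
      rw [neg_smul, smul_neg]
    refine ⟨-lam, ?_, ?_, x, hxne, ?_, hxV⟩
    · rw [hEq]; exact hpsd
    · exact hnz (-lam) (neg_ne_zero.mpr (ne_of_gt hlam))
    · rw [hEq]; exact hxzero
  · obtain ⟨lam, hlam, hpsd, x, hxne, hxzero, hxV⟩ := key' hγ hB hrange ⟨v, hvV, hpos⟩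
    exact ⟨lam, hpsd, hnz lam (ne_of_gt hlam), x, hxne, hxzero, hxV⟩
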